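/- Let (X_{ij})_{1≤i,j≤n} be i.i.d. integrable real random variables with common distribution P, let 𝓜_n = max_{π ∈ S_n} Σ_{i=1}^n X_{iπ(i)}, and for each k let E[M_k] denote the expected maximum of k i.i.d. random variables with distribution P. Then (via the greedy construction of a permutation) E[𝓜_n] ≥ Σ_{i=1}^n E[M_i]. -/

import Mathlib

open MeasureTheory ProbabilityTheory Filter Topology

namespace GreedyAux

/-! ### Picking a maximizer -/

noncomputable def pick {n : ℕ} [NeZero n] (s : Finset (Fin n)) (f : Fin n → ℝ) : Fin n :=
  WithTop.untopD 0 ((s.filter fun j => ∀ j' ∈ s, f j' ≤ f j).min)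

lemma pick_spec {n : ℕ} [NeZero n] (s : Finset (Fin n)) (f : Fin n → ℝ) (hs : s.Nonempty) :
    pick s f ∈ s ∧ ∀ j ∈ s, f j ≤ f (pick s f) := by
  obtain ⟨j, hj, hmax⟩ := s.exists_max_image f hs
  set t := (s.filter fun j => ∀ j' ∈ s, f j' ≤ f j) with ht
  have htne : t.Nonempty := ⟨j, by simp [ht, hj]; exact hmax⟩
  have hpick : pick s f = t.min' htne := by
    rw [pick, ← ht, ← Finset.coe_min' htne, WithTop.untopD_coe]
  have hmem := Finset.min'_mem t htne
  rw [← hpick, ht, Finset.mem_filter] at hmem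
  exact ⟨hmem.1, hmem.2⟩

lemma pick_mem {n : ℕ} [NeZero n] {s : Finset (Fin n)} (f : Fin n → ℝ) (hs : s.Nonempty) :
    pick s f ∈ s := (pick_spec s f hs).1

lemma le_pick {n : ℕ} [NeZero n] {s : Finset (Fin n)} (f : Fin n → ℝ) (hs : s.Nonempty)
    {j : Fin n} (hj : j ∈ s) : f j ≤ f (pick s f) := (pick_spec s f hs).2 j hj

lemma measurable_pick {n : ℕ} [NeZero n] (s : Finset (Fin n)) :
    Measurable fun f : Fin n → ℝ => pick s f := by
  classical
  have hkey : ∀ f : Fin n → ℝ, pick s f =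
      (fun b : Fin n → Bool =>
        WithTop.untopD 0 ((s.filter fun j => b j).min))
      (fun j => decide (∀ j' ∈ s, f j' ≤ f j)) := by
    intro f
    rw [pick]
    congr 2
    apply Finset.filter_congr
    intro j _
    simp
  have heq : (fun f : Fin n → ℝ => pick s f) =
      (fun b : Fin n → Bool => WithTop.untopD 0 ((s.filter fun j => b j).min)) ∘
        (fun (f : Fin n → ℝ) (j : Fin n) => decide (∀ j' ∈ s, f j' ≤ f j)) := funext hkey
  rw [heq]
  refine (measurable_of_countable _).comp ?_
  refine measurable_pi_lambda _ fun j => ?_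
  refine measurable_to_countable' fun y => ?_
  have h1 : MeasurableSet {f : Fin n → ℝ | ∀ j' ∈ s, f j' ≤ f j} := by
    have : {f : Fin n → ℝ | ∀ j' ∈ s, f j' ≤ f j} = ⋂ j' ∈ (s : Set (Fin n)), {f | f j' ≤ f j} := by
      ext f; simp
    rw [this]
    exact MeasurableSet.biInter (s : Set (Fin n)).to_countable fun j' _ =>
      measurableSet_le (measurable_pi_apply j') (measurable_pi_apply j)
  cases y with
  | true =>
      convert h1 using 1
      ext f; simp
  | false =>
      convert h1.compl using 1
      ext f; simp

/-! ### The greedy process on the canonical matrix space -/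

variable {n : ℕ}

/-- Row `i` of a matrix, extended by junk for `i ≥ n`. -/
noncomputable def row (i : ℕ) (x : Fin n × Fin n → ℝ) : Fin n → ℝ :=
  fun j => if h : i < n then x (⟨i, h⟩, j) else 0

lemma measurable_row (i : ℕ) : Measurable (row (n := n) i) := by
  refine measurable_pi_lambda _ fun j => ?_
  unfold row
  split
  · exact measurable_pi_apply _
  · exact measurable_const

lemma row_coe (i : Fin n) (x : Fin n × Fin n → ℝ) (j : Fin n) :
    row (i : ℕ) x j = x (i, j) := by
  simp [row, i.isLt]

noncomputable def gSet [NeZero n] (x : Fin n × Fin n → ℝ) : ℕ → Finset (Fin n)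
  | 0 => ∅
  | (i + 1) => insert (pick (gSet x i)ᶜ (row i x)) (gSet x i)

noncomputable def gSel [NeZero n] (x : Fin n × Fin n → ℝ) (i : ℕ) : Fin n :=
  pick (gSet x i)ᶜ (row i x)

lemma card_gSet [NeZero n] (x : Fin n × Fin n → ℝ) : ∀ i, i ≤ n → (gSet x i).card = i := by
  intro i
  induction i with
  | zero => intro _; simp [gSet]
  | succ i ih =>
      intro hi
      have hi' : i < n := Nat.lt_of_succ_le hi
      have hcard := ih hi'.le
      have hne : ((gSet x i)ᶜ : Finset (Fin n)).Nonempty := by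
        rw [← Finset.card_pos, Finset.card_compl, hcard]
        simp [Fintype.card_fin]
        omega
      have hmem : pick (gSet x i)ᶜ (row i x) ∈ (gSet x i)ᶜ := pick_mem _ hne
      rw [Finset.mem_compl] at hmem
      rw [gSet, Finset.card_insert_of_notMem hmem, hcard]

lemma compl_gSet_nonempty [NeZero n] (x : Fin n × Fin n → ℝ) {i : ℕ} (hi : i < n) :
    ((gSet x i)ᶜ : Finset (Fin n)).Nonempty := by
  rw [← Finset.card_pos, Finset.card_compl, card_gSet x i hi.le]
  simp [Fintype.card_fin]
  omega

lemma gSel_not_mem [NeZero n] (x : Fin n × Fin n → ℝ) {i : ℕ} (hi : i < n) :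
    gSel x i ∉ gSet x i := by
  have := pick_mem (row i x) (compl_gSet_nonempty x hi)
  rw [Finset.mem_compl] at this
  exact this

lemma gSet_subset [NeZero n] (x : Fin n × Fin n → ℝ) {i i' : ℕ} (h : i ≤ i') :
    gSet x i ⊆ gSet x i' := by
  induction i' with
  | zero => simp_all
  | succ i' ih =>
      rcases Nat.lt_or_ge i (i' + 1) with h' | h'
      · exact (ih (Nat.lt_succ_iff.mp h')).trans (Finset.subset_insert _ _)
      · have : i = i' + 1 := le_antisymm h h'
        subst this; rfl

lemma gSel_mem_gSet_succ [NeZero n] (x : Fin n × Fin n → ℝ) (i : ℕ) :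
    gSel x i ∈ gSet x (i + 1) := Finset.mem_insert_self _ _

lemma gSel_injective [NeZero n] (x : Fin n × Fin n → ℝ) :
    Function.Injective (fun i : Fin n => gSel x (i : ℕ)) := by
  intro a b hab
  simp only at hab
  by_contra hne
  rcases Ne.lt_or_gt (fun h : a = b => hne h) with h | h
  · have h1 : gSel x (a : ℕ) ∈ gSet x (b : ℕ) :=
      gSet_subset x (Nat.succ_le_of_lt h) (gSel_mem_gSet_succ x a)
    rw [hab] at h1
    exact gSel_not_mem x b.isLt h1
  · have h1 : gSel x (b : ℕ) ∈ gSet x (a : ℕ) :=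
      gSet_subset x (Nat.succ_le_of_lt h) (gSel_mem_gSet_succ x b)
    rw [← hab] at h1
    exact gSel_not_mem x a.isLt h1

lemma gSet_congr [NeZero n] {x y : Fin n × Fin n → ℝ} :
    ∀ i, (∀ p : Fin n × Fin n, (p.1 : ℕ) < i → x p = y p) → gSet x i = gSet y i := by
  intro i
  induction i with
  | zero => intro _; rfl
  | succ i ih =>
      intro h
      have h1 : gSet x i = gSet y i := ih fun p hp => h p (hp.trans (Nat.lt_succ_self i))
      have h2 : row i x = row i y := by
        funext j
        unfold row
        split
        · next hin => exact h (⟨i, hin⟩, j) (Nat.lt_succ_self i)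
        · rfl
      rw [gSet, gSet, h1, h2]

lemma measurableSet_gSet_fiber [NeZero n] (i : ℕ) (S : Finset (Fin n)) :
    MeasurableSet {x : Fin n × Fin n → ℝ | gSet x i = S} := by
  induction i generalizing S with
  | zero =>
      by_cases h : S = ∅
      · subst h; convert MeasurableSet.univ; ext x; simp [gSet]
      · convert MeasurableSet.empty; ext x; simp [gSet]; exact fun hh => h hh.symm
  | succ i ih =>
      have : {x : Fin n × Fin n → ℝ | gSet x (i + 1) = S} =
          ⋃ (T : Finset (Fin n)) (j : Fin n) (_ : insert j T = S),
            ({x | gSet x i = T} ∩ (fun x => pick Tᶜ (row i x)) ⁻¹' {j}) := by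
        ext x
        simp only [Set.mem_setOf_eq, Set.mem_iUnion, Set.mem_inter_iff, Set.mem_preimage,
          Set.mem_singleton_iff]
        constructor
        · intro h
          exact ⟨gSet x i, pick (gSet x i)ᶜ (row i x), h, rfl, rfl⟩
        · rintro ⟨T, j, hins, hT, hj⟩
          rw [gSet, hT, hj, hins]
      rw [this]
      refine MeasurableSet.iUnion fun T => MeasurableSet.iUnion fun j =>
        MeasurableSet.iUnion fun _ => (ih T).inter ?_
      exact (measurable_pick Tᶜ).comp (measurable_row i) (MeasurableSet.singleton j)

lemma measurable_gSel [NeZero n] (i : ℕ) :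
    Measurable (fun x : Fin n × Fin n → ℝ => gSel x i) := by
  refine measurable_to_countable' fun j => ?_
  have : (fun x : Fin n × Fin n → ℝ => gSel x i) ⁻¹' {j} =
      ⋃ (S : Finset (Fin n)),
        ({x | gSet x i = S} ∩ (fun x => pick Sᶜ (row i x)) ⁻¹' {j}) := by
    ext x
    simp only [Set.mem_preimage, Set.mem_singleton_iff, Set.mem_iUnion, Set.mem_inter_iff,
      Set.mem_setOf_eq]
    constructor
    · intro h; exact ⟨gSet x i, rfl, h⟩
    · rintro ⟨S, hS, hj⟩; rw [gSel, hS]; exact hj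
  rw [this]
  exact MeasurableSet.iUnion fun S => (measurableSet_gSet_fiber i S).inter
    ((measurable_pick Sᶜ).comp (measurable_row i) (MeasurableSet.singleton j))

end GreedyAux

namespace GreedyAux

section MeasureLemmas

variable {P : Measure ℝ} [IsProbabilityMeasure P]

lemma map_pi_of_injective {J ι' : Type*} [Fintype J] [Fintype ι'] (c : ι' → J)
    (hc : Function.Injective c) (P : Measure ℝ) [IsProbabilityMeasure P] :
    (Measure.pi fun _ : J => P).map (fun x m => x (c m)) = Measure.pi (fun _ : ι' => P) := by
  classical
  symm
  refine Measure.pi_eq fun s hs => ?_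
  have hmeas : Measurable fun (x : J → ℝ) (m : ι') => x (c m) :=
    measurable_pi_lambda _ fun m => measurable_pi_apply _
  rw [Measure.map_apply hmeas (MeasurableSet.univ_pi hs)]
  have hpre : (fun (x : J → ℝ) (m : ι') => x (c m)) ⁻¹' (Set.univ.pi s) =
      Set.univ.pi (fun j : J => ⋂ (m : ι') (_ : c m = j), s m) := by
    ext x
    simp only [Set.mem_preimage, Set.mem_univ_pi, Set.mem_iInter]
    constructor
    · intro h j m hm; subst hm; exact h m
    · intro h m; exact h (c m) m rfl
  rw [hpre, Measure.pi_pi]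
  have hB : ∀ m : ι', (⋂ (m' : ι') (_ : c m' = c m), s m') = s m := by
    intro m
    ext t
    simp only [Set.mem_iInter]
    constructor
    · intro h; exact h m rfl
    · intro ht m' hm'; rwa [hc hm']
  calc ∏ j : J, P (⋂ (m : ι') (_ : c m = j), s m)
      = ∏ j ∈ Finset.univ.image c, P (⋂ (m : ι') (_ : c m = j), s m) := by
        refine (Finset.prod_subset (Finset.subset_univ _) fun j _ hj => ?_).symm
        have : (⋂ (m : ι') (_ : c m = j), s m) = Set.univ := by
          ext t
          simp only [Set.mem_iInter, Set.mem_univ, iff_true]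
          intro m hm
          exact absurd (Finset.mem_image.mpr ⟨m, Finset.mem_univ m, hm⟩) hj
        rw [this, measure_univ]
    _ = ∏ m : ι', P (⋂ (m' : ι') (_ : c m' = c m), s m') :=
        Finset.prod_image fun m _ m' _ h => hc h
    _ = ∏ m : ι', P (s m) := by
        exact Finset.prod_congr rfl fun m _ => by rw [hB m]

lemma map_eval_pi {J : Type*} [Fintype J] (q : J) :
    (Measure.pi fun _ : J => P).map (fun x => x q) = P := by
  classical
  ext A hA
  rw [Measure.map_apply (measurable_pi_apply q) hA]
  have hpre : (fun x : J → ℝ => x q) ⁻¹' A =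
      Set.univ.pi (fun j => if j = q then A else Set.univ) := by
    ext x
    simp only [Set.mem_preimage, Set.mem_univ_pi]
    constructor
    · intro h j; by_cases hj : j = q <;> simp [hj, h]
    · intro h; have := h q; simpa using this
  rw [hpre, Measure.pi_pi]
  have : ∀ j : J, P (if j = q then A else Set.univ) = if j = q then P A else 1 := by
    intro j; by_cases hj : j = q <;> simp [hj]
  rw [Finset.prod_congr rfl fun j _ => this j, Finset.prod_ite_eq' Finset.univ q (fun _ => P A)]
  simp

lemma integrable_eval {J : Type*} [Fintype J] (hint : Integrable id P) (q : J) :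
    Integrable (fun x : J → ℝ => x q) (Measure.pi fun _ : J => P) := by
  have h := hint
  rw [← map_eval_pi (P := P) q] at h
  have := (integrable_map_measure (f := fun x : J → ℝ => x q) (g := id)
    aestronglyMeasurable_id (measurable_pi_apply q).aemeasurable).mp h
  simpa [Function.comp] using this

end MeasureLemmas

end GreedyAux

namespace GreedyAux

lemma ciSup_comp_equiv {ι ι' : Type*} (e : ι' ≃ ι) (g : ι → ℝ) :
    ⨆ m, g (e m) = ⨆ i, g i := by
  rw [iSup, iSup, ← e.surjective.range_comp g]
  rfl

lemma measurable_ciSup {ι : Type*} [Fintype ι] [Nonempty ι] {α : Type*} [MeasurableSpace α]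
    {f : ι → α → ℝ} (hf : ∀ i, Measurable (f i)) : Measurable fun x => ⨆ i, f i x := by
  have h : (fun x => ⨆ i, f i x)
      = fun x => Finset.univ.sup' Finset.univ_nonempty (fun i => f i x) :=
    funext fun x => (Finset.sup'_univ_eq_ciSup _).symm
  rw [h]
  have h2 := Finset.measurable_sup' (s := Finset.univ) Finset.univ_nonempty (fun i _ => hf i)
  have h3 : (Finset.univ.sup' Finset.univ_nonempty f)
      = fun x => Finset.univ.sup' Finset.univ_nonempty (fun i => f i x) := by
    funext x
    exact Finset.sup'_apply Finset.univ_nonempty f x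
  rwa [h3] at h2

lemma integrable_sup' {α : Type*} [MeasurableSpace α] {μ : Measure α} {ι : Type*}
    {s : Finset ι} (hs : s.Nonempty) {f : ι → α → ℝ} (hf : ∀ i ∈ s, Integrable (f i) μ) :
    Integrable (fun x => s.sup' hs fun i => f i x) μ := by
  induction hs using Finset.Nonempty.cons_induction with
  | singleton a => simpa using hf a (Finset.mem_singleton_self a)
  | cons a s h hs ih =>
      have h1 : Integrable (f a) μ := hf a (Finset.mem_cons_self a s)
      have h2 := ih fun i hi => hf i (Finset.mem_cons.mpr (Or.inr hi))
      have h3 := h1.sup h2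
      have h4 : (f a ⊔ fun x => s.sup' hs fun i => f i x)
          = fun x => (Finset.cons a s h).sup' (Finset.cons_nonempty h) fun i => f i x := by
        funext x
        exact (Finset.sup'_cons hs (fun i => f i x)).symm
      rwa [h4] at h3

lemma integral_iSup_comp {J ι' : Type*} [Fintype J] [Fintype ι'] [Nonempty ι'] {k : ℕ}
    (hcard : Fintype.card ι' = k) (c : ι' → J) (hc : Function.Injective c)
    (P : Measure ℝ) [IsProbabilityMeasure P] :
    ∫ x, (⨆ m : ι', x (c m)) ∂(Measure.pi fun _ : J => P)
      = ∫ y, (⨆ m : Fin k, y m) ∂(Measure.pi fun _ : Fin k => P) := by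
  have e : Fin k ≃ ι' := (Fintype.equivFinOfCardEq hcard).symm
  have hk : Nonempty (Fin k) := ⟨e.symm (Classical.arbitrary ι')⟩
  have hmap : (Measure.pi fun _ : J => P).map (fun x (m : Fin k) => x (c (e m)))
      = Measure.pi (fun _ : Fin k => P) :=
    map_pi_of_injective _ (hc.comp e.injective) P
  have hmeas : Measurable fun (x : J → ℝ) (m : Fin k) => x (c (e m)) :=
    measurable_pi_lambda _ fun m => measurable_pi_apply _
  have hms : Measurable fun y : Fin k → ℝ => ⨆ m, y m :=
    measurable_ciSup fun m => measurable_pi_apply m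
  rw [← hmap, integral_map hmeas.aemeasurable hms.aestronglyMeasurable]
  refine integral_congr_ae (Eventually.of_forall fun x => ?_)
  simpa using (ciSup_comp_equiv e fun m => x (c m)).symm

lemma split_integral {n : ℕ} (i : Fin n) (P : Measure ℝ) [IsProbabilityMeasure P]
    (F G : (Fin n × Fin n → ℝ) → ℝ)
    (hFdep : ∀ x y, (∀ q : Fin n × Fin n, q.1 = i → x q = y q) → F x = F y)
    (hGdep : ∀ x y, (∀ q : Fin n × Fin n, q.1 ≠ i → x q = y q) → G x = G y) :
    ∫ x, F x * G x ∂(Measure.pi fun _ : Fin n × Fin n => P)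
      = (∫ x, F x ∂(Measure.pi fun _ : Fin n × Fin n => P))
        * ∫ x, G x ∂(Measure.pi fun _ : Fin n × Fin n => P) := by
  classical
  set ν := (Measure.pi fun _ : Fin n × Fin n => P) with hν
  set p : Fin n × Fin n → Prop := fun q => q.1 = i with hp
  set e := MeasurableEquiv.piEquivPiSubtypeProd (fun _ : Fin n × Fin n => ℝ) p with he
  have hmp := measurePreserving_piEquivPiSubtypeProd (fun _ : Fin n × Fin n => P) p
  have hemb : MeasurableEmbedding (⇑e.symm) := e.symm.measurableEmbedding
  set νa := (Measure.pi fun _ : {q : Fin n × Fin n // p q} => P) with hνa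
  set νb := (Measure.pi fun _ : {q : Fin n × Fin n // ¬ p q} => P) with hνb
  have htrans : ∀ H : (Fin n × Fin n → ℝ) → ℝ,
      ∫ x, H x ∂ν = ∫ z, H (e.symm z) ∂(νa.prod νb) :=
    fun H => ((MeasurePreserving.symm e hmp).integral_comp hemb H).symm
  set F' : ({q : Fin n × Fin n // p q} → ℝ) → ℝ := fun a => F (e.symm (a, fun _ => 0)) with hF'
  set G' : ({q : Fin n × Fin n // ¬ p q} → ℝ) → ℝ :=
    fun b => G (e.symm (fun _ => 0, b)) with hG'
  have hFa : ∀ z : ({q : Fin n × Fin n // p q} → ℝ) × ({q : Fin n × Fin n // ¬ p q} → ℝ),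
      F (e.symm z) = F' z.1 := by
    rintro ⟨a, b⟩
    refine hFdep _ _ fun q hq => ?_
    simp only [he, MeasurableEquiv.piEquivPiSubtypeProd, MeasurableEquiv.symm_mk,
      MeasurableEquiv.coe_mk, Equiv.piEquivPiSubtypeProd_symm_apply]
    rw [dif_pos (show p q from hq), dif_pos (show p q from hq)]
  have hGb : ∀ z : ({q : Fin n × Fin n // p q} → ℝ) × ({q : Fin n × Fin n // ¬ p q} → ℝ),
      G (e.symm z) = G' z.2 := by
    rintro ⟨a, b⟩
    refine hGdep _ _ fun q hq => ?_
    simp only [he, MeasurableEquiv.piEquivPiSubtypeProd, MeasurableEquiv.symm_mk,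
      MeasurableEquiv.coe_mk, Equiv.piEquivPiSubtypeProd_symm_apply]
    rw [dif_neg (show ¬ p q from hq), dif_neg (show ¬ p q from hq)]
  have hFeq : ∫ x, F x ∂ν = ∫ a, F' a ∂νa := by
    rw [htrans F]
    have : (fun z : ({q : Fin n × Fin n // p q} → ℝ) × ({q : Fin n × Fin n // ¬ p q} → ℝ)
        => F (e.symm z)) = fun z => F' z.1 * (fun _ => (1:ℝ)) z.2 := by
      funext z; rw [hFa z]; ring
    rw [this, integral_prod_mul F' (fun _ => (1:ℝ))]
    simp
  have hGeq : ∫ x, G x ∂ν = ∫ b, G' b ∂νb := by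
    rw [htrans G]
    have : (fun z : ({q : Fin n × Fin n // p q} → ℝ) × ({q : Fin n × Fin n // ¬ p q} → ℝ)
        => G (e.symm z)) = fun z => (fun _ => (1:ℝ)) z.1 * G' z.2 := by
      funext z; rw [hGb z]; ring
    rw [this, integral_prod_mul (fun _ => (1:ℝ)) G']
    simp
  have hFG : ∫ x, F x * G x ∂ν = (∫ a, F' a ∂νa) * ∫ b, G' b ∂νb := by
    rw [htrans (fun x => F x * G x)]
    have : (fun z : ({q : Fin n × Fin n // p q} → ℝ) × ({q : Fin n × Fin n // ¬ p q} → ℝ)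
        => F (e.symm z) * G (e.symm z)) = fun z => F' z.1 * G' z.2 := by
      funext z; rw [hFa z, hGb z]
    rw [this, integral_prod_mul F' G']
  rw [hFG, hFeq, hGeq]

end GreedyAux

namespace GreedyAux

variable {n : ℕ} [NeZero n] (P : Measure ℝ) [IsProbabilityMeasure P]

lemma measurable_apply_pair (i : Fin n) {k : (Fin n × Fin n → ℝ) → Fin n} (hk : Measurable k) :
    Measurable fun x : Fin n × Fin n → ℝ => x (i, k x) := by
  have h1 : Measurable fun z : (Fin n × Fin n → ℝ) × Fin n => z.1 (i, z.2) :=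
    measurable_from_prod_countable_left fun j => measurable_pi_apply (i, j)
  exact h1.comp (measurable_id.prodMk hk)

lemma abs_row_le (i : Fin n) (x : Fin n × Fin n → ℝ) (k : Fin n) :
    |x (i, k)| ≤ ∑ j : Fin n, |x (i, j)| :=
  Finset.single_le_sum (f := fun j => |x (i, j)|) (fun j _ => abs_nonneg _)
    (Finset.mem_univ k)

lemma integrable_row_sum (hint : Integrable id P) (i : Fin n) :
    Integrable (fun x : Fin n × Fin n → ℝ => ∑ j : Fin n, |x (i, j)|)
      (Measure.pi fun _ : Fin n × Fin n => P) :=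
  integrable_finset_sum _ fun j _ => (integrable_eval hint (i, j)).abs

/-- Expected value of one greedy step. -/
lemma integral_Y (hint : Integrable id P) (i : Fin n) :
    ∫ x, x (i, gSel x ↑i) ∂(Measure.pi fun _ : Fin n × Fin n => P)
      = ∫ y, (⨆ m : Fin (n - ↑i), y m) ∂(Measure.pi fun _ : Fin (n - ↑i) => P) := by
  classical
  set ν := (Measure.pi fun _ : Fin n × Fin n => P) with hν
  set EM : ℝ := ∫ y, (⨆ m : Fin (n - ↑i), y m) ∂(Measure.pi fun _ : Fin (n - ↑i) => P) with hEM
  set gS : Finset (Fin n) → (Fin n × Fin n → ℝ) → ℝ :=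
    fun S x => x (i, pick Sᶜ fun j => x (i, j)) with hgS
  have hgSmeas : ∀ S, Measurable (gS S) := fun S =>
    measurable_apply_pair i ((measurable_pick Sᶜ).comp
      (measurable_pi_lambda _ fun j => measurable_pi_apply (i, j)))
  have hgSint : ∀ S, Integrable (gS S) ν := fun S =>
    (integrable_row_sum P hint i).mono' (hgSmeas S).aestronglyMeasurable
      (Eventually.of_forall fun x => by
        rw [Real.norm_eq_abs]; exact abs_row_le i x _)
  -- decomposition of the greedy value
  have hdecomp : ∀ x, x (i, gSel x ↑i)
      = ∑ S : Finset (Fin n), Set.indicator {y | gSet y ↑i = S} (gS S) x := by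
    intro x
    rw [Finset.sum_eq_single (gSet x ↑i)]
    · rw [Set.indicator_of_mem (show x ∈ {y | gSet y ↑i = gSet x ↑i} from rfl)]
      show x (i, gSel x ↑i) = x (i, pick (gSet x ↑i)ᶜ fun j => x (i, j))
      have hrow : row (↑i : ℕ) x = fun j => x (i, j) := funext (row_coe i x)
      have hsel : gSel x ↑i = pick (gSet x ↑i)ᶜ fun j => x (i, j) := by
        unfold gSel
        rw [hrow]
      rw [hsel]
    · intro S _ hS
      refine Set.indicator_of_notMem ?_ (gS S)
      intro h
      have hx : gSet x ↑i = S := h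
      exact hS hx.symm
    · intro h; exact absurd (Finset.mem_univ _) h
  -- each term
  have hterm : ∀ S : Finset (Fin n),
      ∫ x, Set.indicator {y | gSet y ↑i = S} (gS S) x ∂ν
        = (ν {y | gSet y ↑i = S}).toReal * EM := by
    intro S
    by_cases hcard : S.card = (i : ℕ)
    · -- the main case
      have hSc : (Sᶜ : Finset (Fin n)).Nonempty := by
        rw [← Finset.card_pos, Finset.card_compl, hcard]
        have := i.isLt
        simp only [Fintype.card_fin]
        omega
      haveI hne : Nonempty {j // j ∈ (Sᶜ : Finset (Fin n))} := ⟨⟨hSc.choose, hSc.choose_spec⟩⟩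
      have hfib : MeasurableSet {y : Fin n × Fin n → ℝ | gSet y ↑i = S} :=
        measurableSet_gSet_fiber ↑i S
      -- rewrite indicator as a product
      have hprod : (fun x => Set.indicator {y | gSet y ↑i = S} (gS S) x)
          = fun x => gS S x * Set.indicator {y | gSet y ↑i = S} (fun _ => (1:ℝ)) x := by
        funext x
        by_cases hx : x ∈ {y | gSet y ↑i = S}
        · rw [Set.indicator_of_mem hx, Set.indicator_of_mem hx]; ring
        · rw [Set.indicator_of_notMem hx, Set.indicator_of_notMem hx]; ring
      rw [hprod]
      rw [split_integral i P (gS S) (Set.indicator {y | gSet y ↑i = S} (fun _ => (1:ℝ)))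
        ?_ ?_]
      · -- compute the two integrals
        have h1 : ∫ x, Set.indicator {y | gSet y ↑i = S} (fun _ => (1:ℝ)) x ∂ν
            = (ν {y | gSet y ↑i = S}).toReal := by
          rw [integral_indicator_const (1:ℝ) hfib]; simp [Measure.real]
        have h2 : ∫ x, gS S x ∂ν = EM := by
          have hsup : ∀ x : Fin n × Fin n → ℝ,
              gS S x = ⨆ j : {j // j ∈ (Sᶜ : Finset (Fin n))}, x (i, (j : Fin n)) := by
            intro x
            show x (i, pick Sᶜ fun j => x (i, j)) = _
            refine le_antisymm ?_ ?_
            · exact le_ciSup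
                (f := fun j : {j // j ∈ (Sᶜ : Finset (Fin n))} => x (i, (j : Fin n)))
                (Set.Finite.bddAbove (Set.finite_range _))
                (⟨pick Sᶜ fun j => x (i, j), pick_mem _ hSc⟩ :
                  {j // j ∈ (Sᶜ : Finset (Fin n))})
            · refine ciSup_le fun j => ?_
              exact le_pick (fun j => x (i, j)) hSc j.2
          have hcards : Fintype.card {j // j ∈ (Sᶜ : Finset (Fin n))} = n - ↑i := by
            rw [Fintype.card_coe, Finset.card_compl, hcard, Fintype.card_fin]
          have hinj : Function.Injective
              (fun j : {j // j ∈ (Sᶜ : Finset (Fin n))} => ((i, (j : Fin n)) : Fin n × Fin n)) := by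
            intro a b hab
            exact Subtype.ext (congrArg Prod.snd hab)
          calc ∫ x, gS S x ∂ν
              = ∫ x, (⨆ j : {j // j ∈ (Sᶜ : Finset (Fin n))}, x (i, (j : Fin n))) ∂ν := by
                refine integral_congr_ae (Eventually.of_forall fun x => hsup x)
            _ = EM := integral_iSup_comp hcards _ hinj P
        rw [h1, h2, mul_comm]
      · -- gS S depends only on row i
        intro x y hxy
        simp only [hgS]
        have hrow : (fun j => x (i, j)) = fun j => y (i, j) :=
          funext fun j => hxy (i, j) rfl
        rw [hrow, hxy (i, pick Sᶜ fun j => y (i, j)) rfl]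
      · -- the indicator depends only on the rows off i
        intro x y hxy
        have : gSet x ↑i = gSet y ↑i := by
          refine gSet_congr ↑i fun p hp => ?_
          refine hxy p fun hpeq => ?_
          rw [hpeq] at hp
          exact lt_irrefl _ hp
        by_cases hx : x ∈ {y | gSet y ↑i = S}
        · have hy : y ∈ {y | gSet y ↑i = S} := by
            rw [Set.mem_setOf_eq] at hx ⊢; rw [← this]; exact hx
          rw [Set.indicator_of_mem hx, Set.indicator_of_mem hy]
        · have hy : y ∉ {y | gSet y ↑i = S} := by
            rw [Set.mem_setOf_eq] at hx ⊢; rw [← this]; exact hx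
          rw [Set.indicator_of_notMem hx, Set.indicator_of_notMem hy]
    · -- empty fiber
      have hfib : {y : Fin n × Fin n → ℝ | gSet y ↑i = S} = ∅ := by
        ext y
        simp only [Set.mem_setOf_eq, Set.mem_empty_iff_false, iff_false]
        intro h
        apply hcard
        rw [← h, card_gSet y ↑i i.isLt.le]
      rw [hfib]
      simp
  -- sum up
  have hintind : ∀ S : Finset (Fin n),
      Integrable (fun x => Set.indicator {y | gSet y ↑i = S} (gS S) x) ν := fun S =>
    (hgSint S).indicator (measurableSet_gSet_fiber ↑i S)
  have hfun : (fun x : Fin n × Fin n → ℝ => x (i, gSel x ↑i))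
      = fun x => ∑ S : Finset (Fin n), Set.indicator {y | gSet y ↑i = S} (gS S) x :=
    funext hdecomp
  rw [hfun, integral_finset_sum _ fun S _ => hintind S]
  have : ∀ S ∈ Finset.univ, ∫ x, Set.indicator {y | gSet y ↑i = S} (gS S) x ∂ν
      = (ν {y | gSet y ↑i = S}).toReal * EM := fun S _ => hterm S
  rw [Finset.sum_congr rfl this, ← Finset.sum_mul]
  have hone : ∑ S : Finset (Fin n), (ν {y | gSet y ↑i = S}).toReal = 1 := by
    have hdisj : Pairwise (Function.onFun Disjoint
        fun S : Finset (Fin n) => {y : Fin n × Fin n → ℝ | gSet y ↑i = S}) := by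
      intro S T hST
      refine Set.disjoint_left.mpr fun y hyS hyT => ?_
      have h1 : gSet y ↑i = S := hyS
      have h2 : gSet y ↑i = T := hyT
      exact hST (h1.symm.trans h2)
    have hcover : (⋃ S : Finset (Fin n), {y : Fin n × Fin n → ℝ | gSet y ↑i = S}) =
        Set.univ := by
      ext y; simp only [Set.mem_iUnion, Set.mem_setOf_eq, Set.mem_univ, iff_true]
      exact ⟨gSet y ↑i, rfl⟩
    have := measure_iUnion (μ := ν) hdisj fun S => measurableSet_gSet_fiber ↑i S
    rw [hcover, tsum_fintype, measure_univ] at this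
    have hfin : ∀ S ∈ Finset.univ,
        ν {y : Fin n × Fin n → ℝ | gSet y ↑i = S} ≠ ⊤ := fun S _ =>
      (measure_lt_top ν _).ne
    rw [← ENNReal.toReal_sum hfin, ← this]
    simp
  rw [hone, one_mul]

end GreedyAux

namespace GreedyAux

lemma greedy_bound {n : ℕ} [NeZero n] (P : Measure ℝ) [IsProbabilityMeasure P]
    (hint : Integrable id P) :
    ∑ k ∈ Finset.range n,
        ∫ y, (⨆ m : Fin (k + 1), y m) ∂(Measure.pi fun _ : Fin (k + 1) => P) ≤
      ∫ x, (⨆ π : Equiv.Perm (Fin n), ∑ i, x (i, π i))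
        ∂(Measure.pi fun _ : Fin n × Fin n => P) := by
  classical
  set ν := (Measure.pi fun _ : Fin n × Fin n => P) with hν
  set f : ℕ → ℝ := fun k => ∫ y, (⨆ m : Fin k, y m) ∂(Measure.pi fun _ : Fin k => P) with hf
  have hYmeas : ∀ i : Fin n, Measurable fun x : Fin n × Fin n → ℝ => x (i, gSel x ↑i) :=
    fun i => measurable_apply_pair i (measurable_gSel ↑i)
  have hYint : ∀ i : Fin n, Integrable (fun x => x (i, gSel x ↑i)) ν := fun i =>
    (integrable_row_sum P hint i).mono' (hYmeas i).aestronglyMeasurable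
      (Eventually.of_forall fun x => by rw [Real.norm_eq_abs]; exact abs_row_le i x _)
  have hSint : ∀ π : Equiv.Perm (Fin n), Integrable (fun x => ∑ i, x (i, π i)) ν :=
    fun π => integrable_finset_sum _ fun i _ => integrable_eval hint (i, π i)
  have hsup_eq : (fun x : Fin n × Fin n → ℝ => ⨆ π : Equiv.Perm (Fin n), ∑ i, x (i, π i))
      = fun x => Finset.univ.sup' Finset.univ_nonempty
          (fun π : Equiv.Perm (Fin n) => ∑ i, x (i, π i)) :=
    funext fun x => (Finset.sup'_univ_eq_ciSup _).symm
  have hsupint : Integrable (fun x => ⨆ π : Equiv.Perm (Fin n), ∑ i, x (i, π i)) ν := by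
    rw [hsup_eq]
    exact integrable_sup' _ fun π _ => hSint π
  have hle : ∀ x : Fin n × Fin n → ℝ,
      (∑ i : Fin n, x (i, gSel x ↑i)) ≤ ⨆ π : Equiv.Perm (Fin n), ∑ i, x (i, π i) := by
    intro x
    have hbij : Function.Bijective fun i : Fin n => gSel x ↑i :=
      (Finite.injective_iff_bijective).mp (gSel_injective x)
    have h1 : (∑ i : Fin n, x (i, gSel x ↑i))
        = ∑ i, x (i, (Equiv.ofBijective _ hbij) i) := rfl
    rw [h1]
    exact le_ciSup (f := fun π : Equiv.Perm (Fin n) => ∑ i, x (i, π i))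
      (Set.Finite.bddAbove (Set.finite_range _)) (Equiv.ofBijective _ hbij)
  have hreindex : ∑ k ∈ Finset.range n, f (k + 1) = ∑ i : Fin n, f (n - ↑i) := by
    rw [Fin.sum_univ_eq_sum_range (fun i => f (n - i)) n,
      ← Finset.sum_range_reflect (fun k => f (k + 1)) n]
    refine Finset.sum_congr rfl fun j hj => ?_
    have hj' := Finset.mem_range.mp hj
    have : n - 1 - j + 1 = n - j := by omega
    rw [this]
  calc ∑ k ∈ Finset.range n,
        ∫ y, (⨆ m : Fin (k + 1), y m) ∂(Measure.pi fun _ : Fin (k + 1) => P)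
      = ∑ i : Fin n, f (n - ↑i) := hreindex
    _ = ∑ i : Fin n, ∫ x, x (i, gSel x ↑i) ∂ν := by
        refine Finset.sum_congr rfl fun i _ => ?_
        exact (integral_Y P hint i).symm
    _ = ∫ x, ∑ i : Fin n, x (i, gSel x ↑i) ∂ν :=
        (integral_finset_sum _ fun i _ => hYint i).symm
    _ ≤ ∫ x, (⨆ π : Equiv.Perm (Fin n), ∑ i, x (i, π i)) ∂ν :=
        integral_mono (integrable_finset_sum _ fun i _ => hYint i) hsupint hle

end GreedyAux

open GreedyAux in
/-- **Greedy lower bound for the assignment maximum.**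
For an `n × n` array of i.i.d. integrable real random variables with common law `P`,
`E 𝓜_n ≥ ∑_{k=1}^n E M_k`, where `E M_k = ∫ max_{i < k} x i dP^⊗k` is the expected
maximum of `k` i.i.d. random variables with law `P`. -/
theorem sum_expectation_max_le_expectation_assignment_max
    {Ω : Type*} [MeasurableSpace Ω] (μ : Measure Ω) [IsProbabilityMeasure μ]
    (n : ℕ)
    (X : Fin n → Fin n → Ω → ℝ) (hmeas : ∀ i j, Measurable (X i j))
    (hindep : iIndepFun (fun p : Fin n × Fin n => X p.1 p.2) μ)
    (P : Measure ℝ) [IsProbabilityMeasure P]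
    (hlaw : ∀ i j, μ.map (X i j) = P)
    (hint : Integrable id P) :
    ∑ k ∈ Finset.range n,
        ∫ x, (⨆ i : Fin (k + 1), x i) ∂(Measure.pi fun _ : Fin (k + 1) => P) ≤
      ∫ ω, (⨆ π : Equiv.Perm (Fin n), ∑ i, X i (π i) ω) ∂μ := by
  rcases Nat.eq_zero_or_pos n with hn | hn
  · subst hn
    simp only [Finset.range_zero, Finset.sum_empty]
    have h1 : (fun ω => ⨆ π : Equiv.Perm (Fin 0), ∑ i : Fin 0, X i (π i) ω)
        = fun _ => (0 : ℝ) := by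
      funext ω
      simp
    rw [h1, integral_zero]
  · haveI : NeZero n := ⟨hn.ne'⟩
    set T : Ω → (Fin n × Fin n → ℝ) := fun ω p => X p.1 p.2 ω with hTdef
    have hT : Measurable T := measurable_pi_lambda _ fun p => hmeas p.1 p.2
    have hjoint : (Measure.pi fun _ : Fin n × Fin n => P) = μ.map T := by
      refine Measure.pi_eq fun s hs => ?_
      rw [Measure.map_apply hT (MeasurableSet.univ_pi hs)]
      have hpre : T ⁻¹' Set.univ.pi s
          = ⋂ p : Fin n × Fin n, (fun ω => X p.1 p.2 ω) ⁻¹' s p := by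
        ext ω
        simp [hTdef, Set.mem_univ_pi]
      rw [hpre, hindep.meas_iInter fun p => ⟨s p, hs p, rfl⟩]
      exact Finset.prod_congr rfl fun p _ => by
        rw [← hlaw p.1 p.2, Measure.map_apply (hmeas p.1 p.2) (hs p)]
    have hsupmeas : Measurable fun x : Fin n × Fin n → ℝ =>
        ⨆ π : Equiv.Perm (Fin n), ∑ i, x (i, π i) :=
      measurable_ciSup fun π =>
        Finset.measurable_sum _ fun i _ => measurable_pi_apply (i, π i)
    have hRHS : ∫ ω, (⨆ π : Equiv.Perm (Fin n), ∑ i, X i (π i) ω) ∂μ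
        = ∫ x, (⨆ π : Equiv.Perm (Fin n), ∑ i, x (i, π i))
            ∂(Measure.pi fun _ : Fin n × Fin n => P) := by
      rw [hjoint, integral_map hT.aemeasurable hsupmeas.aestronglyMeasurable]
    rw [hRHS]
    exact greedy_bound P hint
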